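/- Let G be a finite simple (C4,C6,F1,F2,P6)-free strong atom containing an induced 5-cycle, and let C = v1v2v3v4v5 be an induced 5-cycle of G such that |S_5(C)| is maximum over all induced 5-cycles of G and, subject to that, |S_3(C)| is minimum. Then for each i ∈ {1,...,5} (indices modulo 5), S(i-1,i,i+1) is complete to S(i,i+1,i+2). -/

import Mathlib

open SimpleGraph

/-- `G` contains no induced subgraph isomorphic to `H` (`H`-freeness, via graph embeddings). -/
def Free {V W : Type*} (G : SimpleGraph V) (H : SimpleGraph W) : Prop :=
  IsEmpty (H ↪g G)

/-- `v 1, v 2, v 3, v 4, v 0` are the vertices `v₁,…,v₅` of an induced 5-cycle of `G`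
(in cyclic order, indices taken modulo 5, with `v 0` playing the role of `v₅`). -/
def IsInducedC5 {V : Type*} (G : SimpleGraph V) (v : ZMod 5 → V) : Prop :=
  Function.Injective v ∧ ∀ i j, G.Adj (v i) (v j) ↔ (j = i + 1 ∨ i = j + 1)

/-- `S(X)`: the vertices outside the cycle whose neighbourhood on the cycle is exactly
`{v i : i ∈ X}`. -/
def cycS {V : Type*} (G : SimpleGraph V) (v : ZMod 5 → V) (X : Set (ZMod 5)) : Set V :=
  {u | (∀ i, u ≠ v i) ∧ ∀ i, (G.Adj u (v i) ↔ i ∈ X)}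

/-- `S_j`: the vertices outside the cycle with exactly `j` neighbours on the cycle. -/
def cycSdeg {V : Type*} (G : SimpleGraph V) (v : ZMod 5 → V) (j : ℕ) : Set V :=
  {u | (∀ i, u ≠ v i) ∧ {i : ZMod 5 | G.Adj u (v i)}.ncard = j}

/-- `A` is complete to `B`: every vertex of `A` is adjacent to every vertex of `B`. -/
def CompleteTo {V : Type*} (G : SimpleGraph V) (A B : Set V) : Prop :=
  ∀ a ∈ A, ∀ b ∈ B, G.Adj a b

/-- `A` is anti-complete to `B`: there are no edges between `A` and `B`. -/
def AntiCompleteTo {V : Type*} (G : SimpleGraph V) (A B : Set V) : Prop :=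
  ∀ a ∈ A, ∀ b ∈ B, ¬ G.Adj a b

/-- `K` is a clique cutset of `G`: a clique whose removal increases the number of
connected components. -/
def IsCliqueCutset {V : Type*} (G : SimpleGraph V) (K : Set V) : Prop :=
  G.IsClique K ∧
    Nat.card G.ConnectedComponent < Nat.card (G.induce Kᶜ).ConnectedComponent

/-- An atom is a graph with no clique cutset. -/
def IsGraphAtom {V : Type*} (G : SimpleGraph V) : Prop :=
  ∀ K : Set V, ¬ IsCliqueCutset G K

/-- A strong atom: an atom with no universal vertex and no pair of (true) twins. -/
def IsStrongAtom {V : Type*} (G : SimpleGraph V) : Prop :=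
  IsGraphAtom G ∧ (∀ u : V, ¬ ∀ w, w ≠ u → G.Adj u w) ∧
    ∀ u w : V, G.Adj u w → ¬ ∀ z, z ≠ u → z ≠ w → (G.Adj z u ↔ G.Adj z w)

/-- The graph `F₁` of the paper: vertices `0,…,4` are `v₁,…,v₅` (a 5-cycle), `5 = x`,
`6 = y`, `7 = z`; edges: the 5-cycle, `yv₂, yv₃, zv₄, zv₅, xv₃, xv₄, xy, xz`. -/
def F1 : SimpleGraph (Fin 8) :=
  SimpleGraph.fromRel (fun a b => (a, b) ∈
    [((0 : Fin 8), (1 : Fin 8)), (1, 2), (2, 3), (3, 4), (4, 0),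
     (6, 1), (6, 2), (7, 3), (7, 4), (5, 2), (5, 3), (5, 6), (5, 7)])

/-- The graph `F₂` of the paper: vertices `0,…,4` are `v₁,…,v₅` (a 5-cycle), `5 = t`,
`6 = x`, `7 = y`; edges: the 5-cycle, `yv₂, yv₃, xv₄, xv₅, tv₅, tv₁, tv₂, tx, ty`. -/
def F2 : SimpleGraph (Fin 8) :=
  SimpleGraph.fromRel (fun a b => (a, b) ∈
    [((0 : Fin 8), (1 : Fin 8)), (1, 2), (2, 3), (3, 4), (4, 0),
     (7, 1), (7, 2), (6, 3), (6, 4), (5, 4), (5, 0), (5, 1), (5, 6), (5, 7)])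

/-- The underlying 5-cycle `v₁,…,v₅` (as a map `ZMod 5 → V`, with `v 0 = v₅`) of an
(induced) copy of `F₁` or `F₂` given by a vertex map `f : Fin 8 → V`. -/
def underlyingC5 {V : Type*} (f : Fin 8 → V) : ZMod 5 → V :=
  fun i => f ⟨(i - 1).val, by have := ZMod.val_lt (i - 1); omega⟩


section Aux

lemma no_c4 {V : Type*} {G : SimpleGraph V} (hC4 : _root_.Free G (cycleGraph 4)) {a b c d : V}
    (hab : G.Adj a b) (hbc : G.Adj b c) (hcd : G.Adj c d) (hda : G.Adj d a)
    (hac : ¬G.Adj a c) (hbd : ¬G.Adj b d) (hac' : a ≠ c) (hbd' : b ≠ d) : False := by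
  apply hC4.false
  have hca : ¬G.Adj c a := fun h => hac h.symm
  have hdb : ¬G.Adj d b := fun h => hbd h.symm
  refine ⟨⟨![a,b,c,d], ?_⟩, ?_⟩
  · intro i j hij
    fin_cases i <;> fin_cases j <;>
      simp_all [Matrix.cons_val_zero, Matrix.cons_val_one] <;>
      first
      | rfl
      | exact absurd hij.symm (G.ne_of_adj (by assumption))
      | exact absurd hij (G.ne_of_adj (by assumption))
      | exact absurd hij hac' | exact absurd hij.symm hac'
      | exact absurd hij hbd' | exact absurd hij.symm hbd'
  · intro i j
    show G.Adj (![a,b,c,d] i) (![a,b,c,d] j) ↔ (cycleGraph 4).Adj i j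
    fin_cases i <;> fin_cases j <;>
      simp [cycleGraph_adj, hab, hbc, hcd, hda, hab.symm, hbc.symm, hcd.symm, hda.symm,
        hac, hbd, hca, hdb, G.irrefl, Fin.ext_iff] <;> decide


lemma no_c6 {V : Type*} {G : SimpleGraph V} (hC6 : _root_.Free G (cycleGraph 6)) {a b c d e f : V}
    (hab : G.Adj a b) (hbc : G.Adj b c) (hcd : G.Adj c d) (hde : G.Adj d e)
    (hef : G.Adj e f) (hfa : G.Adj f a)
    (hac : ¬G.Adj a c) (had : ¬G.Adj a d) (hae : ¬G.Adj a e)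
    (hbd : ¬G.Adj b d) (hbe : ¬G.Adj b e) (hbf : ¬G.Adj b f)
    (hce : ¬G.Adj c e) (hcf : ¬G.Adj c f) (hdf : ¬G.Adj d f)
    (hac' : a ≠ c) (had' : a ≠ d) (hae' : a ≠ e)
    (hbd' : b ≠ d) (hbe' : b ≠ e) (hbf' : b ≠ f)
    (hce' : c ≠ e) (hcf' : c ≠ f) (hdf' : d ≠ f) : False := by
  apply hC6.false
  have s1 : ¬G.Adj c a := fun h => hac h.symm
  have s2 : ¬G.Adj d a := fun h => had h.symm
  have s3 : ¬G.Adj e a := fun h => hae h.symm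
  have s4 : ¬G.Adj d b := fun h => hbd h.symm
  have s5 : ¬G.Adj e b := fun h => hbe h.symm
  have s6 : ¬G.Adj f b := fun h => hbf h.symm
  have s7 : ¬G.Adj e c := fun h => hce h.symm
  have s8 : ¬G.Adj f c := fun h => hcf h.symm
  have s9 : ¬G.Adj f d := fun h => hdf h.symm
  refine ⟨⟨fun i : Fin 6 => if i.val = 0 then a else if i.val = 1 then b else if i.val = 2 then c
      else if i.val = 3 then d else if i.val = 4 then e else f, ?_⟩, ?_⟩
  · intro i j hij
    fin_cases i <;> fin_cases j <;> simp_all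
  · intro i j
    show G.Adj ((fun i : Fin 6 => if i.val = 0 then a else if i.val = 1 then b else if i.val = 2 then c
        else if i.val = 3 then d else if i.val = 4 then e else f) i) ((fun i : Fin 6 => if i.val = 0 then a else if i.val = 1 then b else if i.val = 2 then c
        else if i.val = 3 then d else if i.val = 4 then e else f) j) ↔ (cycleGraph 6).Adj i j
    fin_cases i <;> fin_cases j <;>
      simp +decide [cycleGraph_adj, hab, hbc, hcd, hde, hef, hfa,
        hab.symm, hbc.symm, hcd.symm, hde.symm, hef.symm, hfa.symm,
        hac, had, hae, hbd, hbe, hbf, hce, hcf, hdf,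
        s1, s2, s3, s4, s5, s6, s7, s8, s9, G.irrefl, Fin.ext_iff]


lemma zmod5_cases (i : ZMod 5) : i = 0 ∨ i = 1 ∨ i = 2 ∨ i = 3 ∨ i = 4 := by
  revert i; decide

lemma core {V : Type*} [Fintype V] {G : SimpleGraph V}
    (hC4 : _root_.Free G (cycleGraph 4)) (hC6 : _root_.Free G (cycleGraph 6))
    (v : ZMod 5 → V) (hv : IsInducedC5 G v)
    (hmax5 : ∀ w : ZMod 5 → V, IsInducedC5 G w →
      (cycSdeg G w 5).ncard ≤ (cycSdeg G v 5).ncard)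
    (hmin3 : ∀ w : ZMod 5 → V, IsInducedC5 G w →
      (cycSdeg G w 5).ncard = (cycSdeg G v 5).ncard →
      (cycSdeg G v 3).ncard ≤ (cycSdeg G w 3).ncard)
    {a b : V}
    (ha1 : G.Adj a (v 1)) (ha2 : G.Adj a (v 2)) (ha3 : G.Adj a (v 3))
    (ha4 : ¬G.Adj a (v 4)) (ha0 : ¬G.Adj a (v 0))
    (hb2 : G.Adj b (v 2)) (hb3 : G.Adj b (v 3)) (hb4 : G.Adj b (v 4))
    (hb0 : ¬G.Adj b (v 0)) (hb1 : ¬G.Adj b (v 1))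
    (hab : ¬G.Adj a b)
    (hnb : ∀ u : V, G.Adj u (v 1) → G.Adj u (v 2) → G.Adj u b →
      ¬G.Adj u (v 3) → ¬G.Adj u (v 4) → ¬G.Adj u (v 0) → G.Adj u a) : False := by
  have hadj : ∀ i j : ZMod 5, (j = i + 1 ∨ i = j + 1) → G.Adj (v i) (v j) :=
    fun i j h => (hv.2 i j).mpr h
  have hnadj : ∀ i j : ZMod 5, ¬(j = i + 1 ∨ i = j + 1) → ¬G.Adj (v i) (v j) :=
    fun i j h h' => h ((hv.2 i j).mp h')
  have hvne : ∀ i j : ZMod 5, i ≠ j → v i ≠ v j := fun i j h e => h (hv.1 e)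
  have hbv0 : b ≠ v 0 := fun e => hnadj 0 2 (by decide) (e ▸ hb2)
  have hbv1 : b ≠ v 1 := fun e => hnadj 1 3 (by decide) (e ▸ hb3)
  have hbv2 : b ≠ v 2 := fun e => hnadj 2 2 (by decide) (e ▸ hb2)
  have hbv3 : b ≠ v 3 := fun e => hnadj 3 3 (by decide) (e ▸ hb3)
  have hbv4 : b ≠ v 4 := fun e => hnadj 4 4 (by decide) (e ▸ hb4)
  have hav0 : a ≠ v 0 := fun e => hnadj 0 2 (by decide) (e ▸ ha2)
  have hav1 : a ≠ v 1 := fun e => hnadj 1 1 (by decide) (e ▸ ha1)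
  have hav2 : a ≠ v 2 := fun e => hnadj 2 2 (by decide) (e ▸ ha2)
  have hav3 : a ≠ v 3 := fun e => hnadj 3 3 (by decide) (e ▸ ha3)
  have hav4 : a ≠ v 4 := fun e => hnadj 4 2 (by decide) (e ▸ ha2)
  have hane : a ≠ b := fun e => hb1 (e ▸ ha1)
  set w : ZMod 5 → V := fun j => if j = 3 then b else v j with hwdef
  have hw0 : w 0 = v 0 := by rw [hwdef]; exact if_neg (by decide)
  have hw1 : w 1 = v 1 := by rw [hwdef]; exact if_neg (by decide)
  have hw2 : w 2 = v 2 := by rw [hwdef]; exact if_neg (by decide)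
  have hw3 : w 3 = b := by rw [hwdef]; exact if_pos rfl
  have hw4 : w 4 = v 4 := by rw [hwdef]; exact if_neg (by decide)
  have hC5w : IsInducedC5 G w := by
    constructor
    · intro x y e
      rcases zmod5_cases x with h|h|h|h|h <;> subst h <;>
        rcases zmod5_cases y with h|h|h|h|h <;> subst h
      · rfl
      · exact absurd e (by rw [hw0, hw1]; exact hvne 0 1 (by decide))
      · exact absurd e (by rw [hw0, hw2]; exact hvne 0 2 (by decide))
      · exact absurd e (by rw [hw0, hw3]; exact hbv0.symm)
      · exact absurd e (by rw [hw0, hw4]; exact hvne 0 4 (by decide))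
      · exact absurd e (by rw [hw1, hw0]; exact hvne 1 0 (by decide))
      · rfl
      · exact absurd e (by rw [hw1, hw2]; exact hvne 1 2 (by decide))
      · exact absurd e (by rw [hw1, hw3]; exact hbv1.symm)
      · exact absurd e (by rw [hw1, hw4]; exact hvne 1 4 (by decide))
      · exact absurd e (by rw [hw2, hw0]; exact hvne 2 0 (by decide))
      · exact absurd e (by rw [hw2, hw1]; exact hvne 2 1 (by decide))
      · rfl
      · exact absurd e (by rw [hw2, hw3]; exact hbv2.symm)
      · exact absurd e (by rw [hw2, hw4]; exact hvne 2 4 (by decide))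
      · exact absurd e (by rw [hw3, hw0]; exact hbv0)
      · exact absurd e (by rw [hw3, hw1]; exact hbv1)
      · exact absurd e (by rw [hw3, hw2]; exact hbv2)
      · rfl
      · exact absurd e (by rw [hw3, hw4]; exact hbv4)
      · exact absurd e (by rw [hw4, hw0]; exact hvne 4 0 (by decide))
      · exact absurd e (by rw [hw4, hw1]; exact hvne 4 1 (by decide))
      · exact absurd e (by rw [hw4, hw2]; exact hvne 4 2 (by decide))
      · exact absurd e (by rw [hw4, hw3]; exact hbv4.symm)
      · rfl
    · intro x y
      rcases zmod5_cases x with h|h|h|h|h <;> subst h <;>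
        rcases zmod5_cases y with h|h|h|h|h <;> subst h
      · rw [hw0]; exact iff_of_false (hnadj 0 0 (by decide)) (by decide)
      · rw [hw0, hw1]; exact iff_of_true (hadj 0 1 (by decide)) (by decide)
      · rw [hw0, hw2]; exact iff_of_false (hnadj 0 2 (by decide)) (by decide)
      · rw [hw0, hw3]; exact iff_of_false (fun h => hb0 h.symm) (by decide)
      · rw [hw0, hw4]; exact iff_of_true (hadj 0 4 (by decide)) (by decide)
      · rw [hw1, hw0]; exact iff_of_true (hadj 1 0 (by decide)) (by decide)
      · rw [hw1]; exact iff_of_false (hnadj 1 1 (by decide)) (by decide)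
      · rw [hw1, hw2]; exact iff_of_true (hadj 1 2 (by decide)) (by decide)
      · rw [hw1, hw3]; exact iff_of_false (fun h => hb1 h.symm) (by decide)
      · rw [hw1, hw4]; exact iff_of_false (hnadj 1 4 (by decide)) (by decide)
      · rw [hw2, hw0]; exact iff_of_false (hnadj 2 0 (by decide)) (by decide)
      · rw [hw2, hw1]; exact iff_of_true (hadj 2 1 (by decide)) (by decide)
      · rw [hw2]; exact iff_of_false (hnadj 2 2 (by decide)) (by decide)
      · rw [hw2, hw3]; exact iff_of_true hb2.symm (by decide)
      · rw [hw2, hw4]; exact iff_of_false (hnadj 2 4 (by decide)) (by decide)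
      · rw [hw3, hw0]; exact iff_of_false hb0 (by decide)
      · rw [hw3, hw1]; exact iff_of_false hb1 (by decide)
      · rw [hw3, hw2]; exact iff_of_true hb2 (by decide)
      · rw [hw3]; exact iff_of_false G.irrefl (by decide)
      · rw [hw3, hw4]; exact iff_of_true hb4 (by decide)
      · rw [hw4, hw0]; exact iff_of_true (hadj 4 0 (by decide)) (by decide)
      · rw [hw4, hw1]; exact iff_of_false (hnadj 4 1 (by decide)) (by decide)
      · rw [hw4, hw2]; exact iff_of_false (hnadj 4 2 (by decide)) (by decide)
      · rw [hw4, hw3]; exact iff_of_true hb4.symm (by decide)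
      · rw [hw4]; exact iff_of_false (hnadj 4 4 (by decide)) (by decide)
  have h55 : cycSdeg G v 5 ⊆ cycSdeg G w 5 := by
    rintro u ⟨hne, hcard⟩
    have huniv : {i : ZMod 5 | G.Adj u (v i)} = Set.univ := by
      apply Set.eq_of_subset_of_ncard_le (Set.subset_univ _)
      rw [hcard, Set.ncard_univ, Nat.card_eq_fintype_card, ZMod.card]
    have hall : ∀ i, G.Adj u (v i) := fun i => by
      have h : i ∈ {i : ZMod 5 | G.Adj u (v i)} := huniv.symm ▸ Set.mem_univ i
      exact h
    have hub : G.Adj u b := by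
      by_contra hub
      exact no_c4 hC4 (hall 2) hb2.symm hb4 (hall 4).symm hub (hnadj 2 4 (by decide))
        (fun e => hb1 (e ▸ hall 1)) (hvne 2 4 (by decide))
    refine ⟨?_, ?_⟩
    · intro i
      rcases zmod5_cases i with h|h|h|h|h <;> subst h
      · rw [hw0]; exact hne 0
      · rw [hw1]; exact hne 1
      · rw [hw2]; exact hne 2
      · rw [hw3]; exact fun e => hb1 (e ▸ hall 1)
      · rw [hw4]; exact hne 4
    · have h : {i : ZMod 5 | G.Adj u (w i)} = Set.univ := by
        apply Set.eq_univ_of_forall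
        intro i
        simp only [Set.mem_setOf_eq]
        rcases zmod5_cases i with h|h|h|h|h <;> subst h
        · rw [hw0]; exact hall 0
        · rw [hw1]; exact hall 1
        · rw [hw2]; exact hall 2
        · rw [hw3]; exact hub
        · rw [hw4]; exact hall 4
      rw [h, Set.ncard_univ, Nat.card_eq_fintype_card, ZMod.card]
  have h5e : (cycSdeg G w 5).ncard = (cycSdeg G v 5).ncard :=
    le_antisymm (hmax5 w hC5w) (Set.ncard_le_ncard h55 (Set.toFinite _))
  have h33 : (cycSdeg G v 3).ncard ≤ (cycSdeg G w 3).ncard := hmin3 w hC5w h5e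
  have haS3 : a ∈ cycSdeg G v 3 := by
    refine ⟨?_, ?_⟩
    · intro i
      rcases zmod5_cases i with h|h|h|h|h <;> subst h
      exacts [hav0, hav1, hav2, hav3, hav4]
    · have h : {i : ZMod 5 | G.Adj a (v i)} = (({1,2,3} : Finset (ZMod 5)) : Set (ZMod 5)) := by
        ext i
        simp only [Set.mem_setOf_eq]
        rcases zmod5_cases i with h|h|h|h|h <;> subst h
        · exact iff_of_false ha0 (by decide)
        · exact iff_of_true ha1 (by decide)
        · exact iff_of_true ha2 (by decide)
        · exact iff_of_true ha3 (by decide)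
        · exact iff_of_false ha4 (by decide)
      rw [h, Set.ncard_coe_finset]
      decide
  have hbS3 : b ∈ cycSdeg G v 3 := by
    refine ⟨?_, ?_⟩
    · intro i
      rcases zmod5_cases i with h|h|h|h|h <;> subst h
      exacts [hbv0, hbv1, hbv2, hbv3, hbv4]
    · have h : {i : ZMod 5 | G.Adj b (v i)} = (({2,3,4} : Finset (ZMod 5)) : Set (ZMod 5)) := by
        ext i
        simp only [Set.mem_setOf_eq]
        rcases zmod5_cases i with h|h|h|h|h <;> subst h
        · exact iff_of_false hb0 (by decide)
        · exact iff_of_false hb1 (by decide)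
        · exact iff_of_true hb2 (by decide)
        · exact iff_of_true hb3 (by decide)
        · exact iff_of_true hb4 (by decide)
      rw [h, Set.ncard_coe_finset]
      decide
  have hclaim : ∀ u, u ∈ cycSdeg G w 3 → u ≠ v 3 →
      (u ∈ cycSdeg G v 3 ∧ u ≠ a ∧ u ≠ b) := by
    rintro u ⟨hne, hcard⟩ hu3
    have hub' : u ≠ b := by have h := hne 3; rwa [hw3] at h
    have hun : ∀ i : ZMod 5, u ≠ v i := by
      intro i
      rcases zmod5_cases i with h|h|h|h|h <;> subst h
      · have h := hne 0; rwa [hw0] at h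
      · have h := hne 1; rwa [hw1] at h
      · have h := hne 2; rwa [hw2] at h
      · exact hu3
      · have h := hne 4; rwa [hw4] at h
    by_cases h0 : G.Adj u (v 0) <;> by_cases h1 : G.Adj u (v 1) <;>
      by_cases h2 : G.Adj u (v 2) <;> by_cases h3 : G.Adj u b <;>
      by_cases h4 : G.Adj u (v 4)
    · -- TTTTT
      have hset : {i : ZMod 5 | G.Adj u (w i)} = (({0,1,2,3,4} : Finset (ZMod 5)) : Set (ZMod 5)) := by
        ext i
        simp only [Set.mem_setOf_eq]
        rcases zmod5_cases i with h|h|h|h|h <;> subst h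
        · rw [hw0]; exact iff_of_true h0 (by decide)
        · rw [hw1]; exact iff_of_true h1 (by decide)
        · rw [hw2]; exact iff_of_true h2 (by decide)
        · rw [hw3]; exact iff_of_true h3 (by decide)
        · rw [hw4]; exact iff_of_true h4 (by decide)
      rw [hset, Set.ncard_coe_finset] at hcard
      exact absurd hcard (by decide)
    · -- TTTTF
      have hset : {i : ZMod 5 | G.Adj u (w i)} = (({0,1,2,3} : Finset (ZMod 5)) : Set (ZMod 5)) := by
        ext i
        simp only [Set.mem_setOf_eq]
        rcases zmod5_cases i with h|h|h|h|h <;> subst h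
        · rw [hw0]; exact iff_of_true h0 (by decide)
        · rw [hw1]; exact iff_of_true h1 (by decide)
        · rw [hw2]; exact iff_of_true h2 (by decide)
        · rw [hw3]; exact iff_of_true h3 (by decide)
        · rw [hw4]; exact iff_of_false h4 (by decide)
      rw [hset, Set.ncard_coe_finset] at hcard
      exact absurd hcard (by decide)
    · -- TTTFT
      have hset : {i : ZMod 5 | G.Adj u (w i)} = (({0,1,2,4} : Finset (ZMod 5)) : Set (ZMod 5)) := by
        ext i
        simp only [Set.mem_setOf_eq]
        rcases zmod5_cases i with h|h|h|h|h <;> subst h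
        · rw [hw0]; exact iff_of_true h0 (by decide)
        · rw [hw1]; exact iff_of_true h1 (by decide)
        · rw [hw2]; exact iff_of_true h2 (by decide)
        · rw [hw3]; exact iff_of_false h3 (by decide)
        · rw [hw4]; exact iff_of_true h4 (by decide)
      rw [hset, Set.ncard_coe_finset] at hcard
      exact absurd hcard (by decide)
    · -- TTTFF
      have hset : {i : ZMod 5 | G.Adj u (w i)} = (({0,1,2} : Finset (ZMod 5)) : Set (ZMod 5)) := by
        ext i
        simp only [Set.mem_setOf_eq]
        rcases zmod5_cases i with h|h|h|h|h <;> subst h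
        · rw [hw0]; exact iff_of_true h0 (by decide)
        · rw [hw1]; exact iff_of_true h1 (by decide)
        · rw [hw2]; exact iff_of_true h2 (by decide)
        · rw [hw3]; exact iff_of_false h3 (by decide)
        · rw [hw4]; exact iff_of_false h4 (by decide)
      rw [hset, Set.ncard_coe_finset] at hcard
      by_cases huv3 : G.Adj u (v 3)
      · exact (no_c4 hC4 huv3 (hadj 3 4 (by decide)) (hadj 4 0 (by decide)) h0.symm h4 (hnadj 3 0 (by decide)) (hun 4) (hvne 3 0 (by decide))).elim
      · refine ?_
        refine ⟨⟨hun, ?_⟩, (fun e => ha0 (e ▸ h0)), hub'⟩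
        have hset2 : {i : ZMod 5 | G.Adj u (v i)} = (({0,1,2} : Finset (ZMod 5)) : Set (ZMod 5)) := by
          ext i
          simp only [Set.mem_setOf_eq]
          rcases zmod5_cases i with h|h|h|h|h <;> subst h
          · exact iff_of_true h0 (by decide)
          · exact iff_of_true h1 (by decide)
          · exact iff_of_true h2 (by decide)
          · exact iff_of_false huv3 (by decide)
          · exact iff_of_false h4 (by decide)
        rw [hset2, Set.ncard_coe_finset]
        decide
    · -- TTFTT
      have hset : {i : ZMod 5 | G.Adj u (w i)} = (({0,1,3,4} : Finset (ZMod 5)) : Set (ZMod 5)) := by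
        ext i
        simp only [Set.mem_setOf_eq]
        rcases zmod5_cases i with h|h|h|h|h <;> subst h
        · rw [hw0]; exact iff_of_true h0 (by decide)
        · rw [hw1]; exact iff_of_true h1 (by decide)
        · rw [hw2]; exact iff_of_false h2 (by decide)
        · rw [hw3]; exact iff_of_true h3 (by decide)
        · rw [hw4]; exact iff_of_true h4 (by decide)
      rw [hset, Set.ncard_coe_finset] at hcard
      exact absurd hcard (by decide)
    · -- TTFTF
      have hset : {i : ZMod 5 | G.Adj u (w i)} = (({0,1,3} : Finset (ZMod 5)) : Set (ZMod 5)) := by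
        ext i
        simp only [Set.mem_setOf_eq]
        rcases zmod5_cases i with h|h|h|h|h <;> subst h
        · rw [hw0]; exact iff_of_true h0 (by decide)
        · rw [hw1]; exact iff_of_true h1 (by decide)
        · rw [hw2]; exact iff_of_false h2 (by decide)
        · rw [hw3]; exact iff_of_true h3 (by decide)
        · rw [hw4]; exact iff_of_false h4 (by decide)
      rw [hset, Set.ncard_coe_finset] at hcard
      exact (no_c4 hC4 h1 (hadj 1 2 (by decide)) hb2.symm h3.symm h2 (fun h => hb1 h.symm) (hun 2) hbv1.symm).elim
    · -- TTFFT
      have hset : {i : ZMod 5 | G.Adj u (w i)} = (({0,1,4} : Finset (ZMod 5)) : Set (ZMod 5)) := by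
        ext i
        simp only [Set.mem_setOf_eq]
        rcases zmod5_cases i with h|h|h|h|h <;> subst h
        · rw [hw0]; exact iff_of_true h0 (by decide)
        · rw [hw1]; exact iff_of_true h1 (by decide)
        · rw [hw2]; exact iff_of_false h2 (by decide)
        · rw [hw3]; exact iff_of_false h3 (by decide)
        · rw [hw4]; exact iff_of_true h4 (by decide)
      rw [hset, Set.ncard_coe_finset] at hcard
      by_cases huv3 : G.Adj u (v 3)
      · exact (no_c4 hC4 h1 (hadj 1 2 (by decide)) (hadj 2 3 (by decide)) huv3.symm h2 (hnadj 1 3 (by decide)) (hun 2) (hvne 1 3 (by decide))).elim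
      · refine ?_
        refine ⟨⟨hun, ?_⟩, (fun e => ha4 (e ▸ h4)), hub'⟩
        have hset2 : {i : ZMod 5 | G.Adj u (v i)} = (({0,1,4} : Finset (ZMod 5)) : Set (ZMod 5)) := by
          ext i
          simp only [Set.mem_setOf_eq]
          rcases zmod5_cases i with h|h|h|h|h <;> subst h
          · exact iff_of_true h0 (by decide)
          · exact iff_of_true h1 (by decide)
          · exact iff_of_false h2 (by decide)
          · exact iff_of_false huv3 (by decide)
          · exact iff_of_true h4 (by decide)
        rw [hset2, Set.ncard_coe_finset]
        decide
    · -- TTFFF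
      have hset : {i : ZMod 5 | G.Adj u (w i)} = (({0,1} : Finset (ZMod 5)) : Set (ZMod 5)) := by
        ext i
        simp only [Set.mem_setOf_eq]
        rcases zmod5_cases i with h|h|h|h|h <;> subst h
        · rw [hw0]; exact iff_of_true h0 (by decide)
        · rw [hw1]; exact iff_of_true h1 (by decide)
        · rw [hw2]; exact iff_of_false h2 (by decide)
        · rw [hw3]; exact iff_of_false h3 (by decide)
        · rw [hw4]; exact iff_of_false h4 (by decide)
      rw [hset, Set.ncard_coe_finset] at hcard
      exact absurd hcard (by decide)
    · -- TFTTT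
      have hset : {i : ZMod 5 | G.Adj u (w i)} = (({0,2,3,4} : Finset (ZMod 5)) : Set (ZMod 5)) := by
        ext i
        simp only [Set.mem_setOf_eq]
        rcases zmod5_cases i with h|h|h|h|h <;> subst h
        · rw [hw0]; exact iff_of_true h0 (by decide)
        · rw [hw1]; exact iff_of_false h1 (by decide)
        · rw [hw2]; exact iff_of_true h2 (by decide)
        · rw [hw3]; exact iff_of_true h3 (by decide)
        · rw [hw4]; exact iff_of_true h4 (by decide)
      rw [hset, Set.ncard_coe_finset] at hcard
      exact absurd hcard (by decide)
    · -- TFTTF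
      have hset : {i : ZMod 5 | G.Adj u (w i)} = (({0,2,3} : Finset (ZMod 5)) : Set (ZMod 5)) := by
        ext i
        simp only [Set.mem_setOf_eq]
        rcases zmod5_cases i with h|h|h|h|h <;> subst h
        · rw [hw0]; exact iff_of_true h0 (by decide)
        · rw [hw1]; exact iff_of_false h1 (by decide)
        · rw [hw2]; exact iff_of_true h2 (by decide)
        · rw [hw3]; exact iff_of_true h3 (by decide)
        · rw [hw4]; exact iff_of_false h4 (by decide)
      rw [hset, Set.ncard_coe_finset] at hcard
      exact (no_c4 hC4 h3 hb4 (hadj 4 0 (by decide)) h0.symm h4 hb0 (hun 4) hbv0).elim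
    · -- TFTFT
      have hset : {i : ZMod 5 | G.Adj u (w i)} = (({0,2,4} : Finset (ZMod 5)) : Set (ZMod 5)) := by
        ext i
        simp only [Set.mem_setOf_eq]
        rcases zmod5_cases i with h|h|h|h|h <;> subst h
        · rw [hw0]; exact iff_of_true h0 (by decide)
        · rw [hw1]; exact iff_of_false h1 (by decide)
        · rw [hw2]; exact iff_of_true h2 (by decide)
        · rw [hw3]; exact iff_of_false h3 (by decide)
        · rw [hw4]; exact iff_of_true h4 (by decide)
      rw [hset, Set.ncard_coe_finset] at hcard
      exact (no_c4 hC4 h2 hb2.symm hb4 h4.symm h3 (hnadj 2 4 (by decide)) hub' (hvne 2 4 (by decide))).elim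
    · -- TFTFF
      have hset : {i : ZMod 5 | G.Adj u (w i)} = (({0,2} : Finset (ZMod 5)) : Set (ZMod 5)) := by
        ext i
        simp only [Set.mem_setOf_eq]
        rcases zmod5_cases i with h|h|h|h|h <;> subst h
        · rw [hw0]; exact iff_of_true h0 (by decide)
        · rw [hw1]; exact iff_of_false h1 (by decide)
        · rw [hw2]; exact iff_of_true h2 (by decide)
        · rw [hw3]; exact iff_of_false h3 (by decide)
        · rw [hw4]; exact iff_of_false h4 (by decide)
      rw [hset, Set.ncard_coe_finset] at hcard
      exact absurd hcard (by decide)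
    · -- TFFTT
      have hset : {i : ZMod 5 | G.Adj u (w i)} = (({0,3,4} : Finset (ZMod 5)) : Set (ZMod 5)) := by
        ext i
        simp only [Set.mem_setOf_eq]
        rcases zmod5_cases i with h|h|h|h|h <;> subst h
        · rw [hw0]; exact iff_of_true h0 (by decide)
        · rw [hw1]; exact iff_of_false h1 (by decide)
        · rw [hw2]; exact iff_of_false h2 (by decide)
        · rw [hw3]; exact iff_of_true h3 (by decide)
        · rw [hw4]; exact iff_of_true h4 (by decide)
      rw [hset, Set.ncard_coe_finset] at hcard
      by_cases hua : G.Adj u a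
      · exact (no_c4 hC4 (hadj 1 0 (by decide)) h0.symm hua ha1 (fun h => h1 h.symm) (fun h => ha0 h.symm) (hun 1).symm hav0.symm).elim
      · by_cases huv3 : G.Adj u (v 3)
        · refine ?_
          refine ⟨⟨hun, ?_⟩, (fun e => hab (e ▸ h3)), hub'⟩
          have hset2 : {i : ZMod 5 | G.Adj u (v i)} = (({0,3,4} : Finset (ZMod 5)) : Set (ZMod 5)) := by
            ext i
            simp only [Set.mem_setOf_eq]
            rcases zmod5_cases i with h|h|h|h|h <;> subst h
            · exact iff_of_true h0 (by decide)
            · exact iff_of_false h1 (by decide)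
            · exact iff_of_false h2 (by decide)
            · exact iff_of_true huv3 (by decide)
            · exact iff_of_true h4 (by decide)
          rw [hset2, Set.ncard_coe_finset]
          decide
        · exact (no_c6 hC6 (hadj 1 0 (by decide)) h0.symm h3 hb3 ha3.symm ha1 (fun h => h1 h.symm) (fun h => hb1 h.symm) (hnadj 1 3 (by decide)) (fun h => hb0 h.symm) (hnadj 0 3 (by decide)) (fun h => ha0 h.symm) huv3 hua (fun h => hab h.symm) (hun 1).symm hbv1.symm (hvne 1 3 (by decide)) hbv0.symm (hvne 0 3 (by decide)) hav0.symm (hun 3) (fun e => h2 (e ▸ ha2)) hane.symm).elim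
    · -- TFFTF
      have hset : {i : ZMod 5 | G.Adj u (w i)} = (({0,3} : Finset (ZMod 5)) : Set (ZMod 5)) := by
        ext i
        simp only [Set.mem_setOf_eq]
        rcases zmod5_cases i with h|h|h|h|h <;> subst h
        · rw [hw0]; exact iff_of_true h0 (by decide)
        · rw [hw1]; exact iff_of_false h1 (by decide)
        · rw [hw2]; exact iff_of_false h2 (by decide)
        · rw [hw3]; exact iff_of_true h3 (by decide)
        · rw [hw4]; exact iff_of_false h4 (by decide)
      rw [hset, Set.ncard_coe_finset] at hcard
      exact absurd hcard (by decide)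
    · -- TFFFT
      have hset : {i : ZMod 5 | G.Adj u (w i)} = (({0,4} : Finset (ZMod 5)) : Set (ZMod 5)) := by
        ext i
        simp only [Set.mem_setOf_eq]
        rcases zmod5_cases i with h|h|h|h|h <;> subst h
        · rw [hw0]; exact iff_of_true h0 (by decide)
        · rw [hw1]; exact iff_of_false h1 (by decide)
        · rw [hw2]; exact iff_of_false h2 (by decide)
        · rw [hw3]; exact iff_of_false h3 (by decide)
        · rw [hw4]; exact iff_of_true h4 (by decide)
      rw [hset, Set.ncard_coe_finset] at hcard
      exact absurd hcard (by decide)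
    · -- TFFFF
      have hset : {i : ZMod 5 | G.Adj u (w i)} = (({0} : Finset (ZMod 5)) : Set (ZMod 5)) := by
        ext i
        simp only [Set.mem_setOf_eq]
        rcases zmod5_cases i with h|h|h|h|h <;> subst h
        · rw [hw0]; exact iff_of_true h0 (by decide)
        · rw [hw1]; exact iff_of_false h1 (by decide)
        · rw [hw2]; exact iff_of_false h2 (by decide)
        · rw [hw3]; exact iff_of_false h3 (by decide)
        · rw [hw4]; exact iff_of_false h4 (by decide)
      rw [hset, Set.ncard_coe_finset] at hcard
      exact absurd hcard (by decide)
    · -- FTTTT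
      have hset : {i : ZMod 5 | G.Adj u (w i)} = (({1,2,3,4} : Finset (ZMod 5)) : Set (ZMod 5)) := by
        ext i
        simp only [Set.mem_setOf_eq]
        rcases zmod5_cases i with h|h|h|h|h <;> subst h
        · rw [hw0]; exact iff_of_false h0 (by decide)
        · rw [hw1]; exact iff_of_true h1 (by decide)
        · rw [hw2]; exact iff_of_true h2 (by decide)
        · rw [hw3]; exact iff_of_true h3 (by decide)
        · rw [hw4]; exact iff_of_true h4 (by decide)
      rw [hset, Set.ncard_coe_finset] at hcard
      exact absurd hcard (by decide)
    · -- FTTTF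
      have hset : {i : ZMod 5 | G.Adj u (w i)} = (({1,2,3} : Finset (ZMod 5)) : Set (ZMod 5)) := by
        ext i
        simp only [Set.mem_setOf_eq]
        rcases zmod5_cases i with h|h|h|h|h <;> subst h
        · rw [hw0]; exact iff_of_false h0 (by decide)
        · rw [hw1]; exact iff_of_true h1 (by decide)
        · rw [hw2]; exact iff_of_true h2 (by decide)
        · rw [hw3]; exact iff_of_true h3 (by decide)
        · rw [hw4]; exact iff_of_false h4 (by decide)
      rw [hset, Set.ncard_coe_finset] at hcard
      by_cases huv3 : G.Adj u (v 3)
      · refine ?_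
        refine ⟨⟨hun, ?_⟩, (fun e => hab (e ▸ h3)), hub'⟩
        have hset2 : {i : ZMod 5 | G.Adj u (v i)} = (({1,2,3} : Finset (ZMod 5)) : Set (ZMod 5)) := by
          ext i
          simp only [Set.mem_setOf_eq]
          rcases zmod5_cases i with h|h|h|h|h <;> subst h
          · exact iff_of_false h0 (by decide)
          · exact iff_of_true h1 (by decide)
          · exact iff_of_true h2 (by decide)
          · exact iff_of_true huv3 (by decide)
          · exact iff_of_false h4 (by decide)
        rw [hset2, Set.ncard_coe_finset]
        decide
      · have hua : G.Adj u a := hnb u h1 h2 h3 huv3 h4 h0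
        exact (no_c4 hC4 hua.symm h3 hb3 ha3.symm hab huv3 hane (hun 3)).elim
    · -- FTTFT
      have hset : {i : ZMod 5 | G.Adj u (w i)} = (({1,2,4} : Finset (ZMod 5)) : Set (ZMod 5)) := by
        ext i
        simp only [Set.mem_setOf_eq]
        rcases zmod5_cases i with h|h|h|h|h <;> subst h
        · rw [hw0]; exact iff_of_false h0 (by decide)
        · rw [hw1]; exact iff_of_true h1 (by decide)
        · rw [hw2]; exact iff_of_true h2 (by decide)
        · rw [hw3]; exact iff_of_false h3 (by decide)
        · rw [hw4]; exact iff_of_true h4 (by decide)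
      rw [hset, Set.ncard_coe_finset] at hcard
      exact (no_c4 hC4 h2 hb2.symm hb4 h4.symm h3 (hnadj 2 4 (by decide)) hub' (hvne 2 4 (by decide))).elim
    · -- FTTFF
      have hset : {i : ZMod 5 | G.Adj u (w i)} = (({1,2} : Finset (ZMod 5)) : Set (ZMod 5)) := by
        ext i
        simp only [Set.mem_setOf_eq]
        rcases zmod5_cases i with h|h|h|h|h <;> subst h
        · rw [hw0]; exact iff_of_false h0 (by decide)
        · rw [hw1]; exact iff_of_true h1 (by decide)
        · rw [hw2]; exact iff_of_true h2 (by decide)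
        · rw [hw3]; exact iff_of_false h3 (by decide)
        · rw [hw4]; exact iff_of_false h4 (by decide)
      rw [hset, Set.ncard_coe_finset] at hcard
      exact absurd hcard (by decide)
    · -- FTFTT
      have hset : {i : ZMod 5 | G.Adj u (w i)} = (({1,3,4} : Finset (ZMod 5)) : Set (ZMod 5)) := by
        ext i
        simp only [Set.mem_setOf_eq]
        rcases zmod5_cases i with h|h|h|h|h <;> subst h
        · rw [hw0]; exact iff_of_false h0 (by decide)
        · rw [hw1]; exact iff_of_true h1 (by decide)
        · rw [hw2]; exact iff_of_false h2 (by decide)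
        · rw [hw3]; exact iff_of_true h3 (by decide)
        · rw [hw4]; exact iff_of_true h4 (by decide)
      rw [hset, Set.ncard_coe_finset] at hcard
      exact (no_c4 hC4 h1 (hadj 1 2 (by decide)) hb2.symm h3.symm h2 (fun h => hb1 h.symm) (hun 2) hbv1.symm).elim
    · -- FTFTF
      have hset : {i : ZMod 5 | G.Adj u (w i)} = (({1,3} : Finset (ZMod 5)) : Set (ZMod 5)) := by
        ext i
        simp only [Set.mem_setOf_eq]
        rcases zmod5_cases i with h|h|h|h|h <;> subst h
        · rw [hw0]; exact iff_of_false h0 (by decide)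
        · rw [hw1]; exact iff_of_true h1 (by decide)
        · rw [hw2]; exact iff_of_false h2 (by decide)
        · rw [hw3]; exact iff_of_true h3 (by decide)
        · rw [hw4]; exact iff_of_false h4 (by decide)
      rw [hset, Set.ncard_coe_finset] at hcard
      exact absurd hcard (by decide)
    · -- FTFFT
      have hset : {i : ZMod 5 | G.Adj u (w i)} = (({1,4} : Finset (ZMod 5)) : Set (ZMod 5)) := by
        ext i
        simp only [Set.mem_setOf_eq]
        rcases zmod5_cases i with h|h|h|h|h <;> subst h
        · rw [hw0]; exact iff_of_false h0 (by decide)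
        · rw [hw1]; exact iff_of_true h1 (by decide)
        · rw [hw2]; exact iff_of_false h2 (by decide)
        · rw [hw3]; exact iff_of_false h3 (by decide)
        · rw [hw4]; exact iff_of_true h4 (by decide)
      rw [hset, Set.ncard_coe_finset] at hcard
      exact absurd hcard (by decide)
    · -- FTFFF
      have hset : {i : ZMod 5 | G.Adj u (w i)} = (({1} : Finset (ZMod 5)) : Set (ZMod 5)) := by
        ext i
        simp only [Set.mem_setOf_eq]
        rcases zmod5_cases i with h|h|h|h|h <;> subst h
        · rw [hw0]; exact iff_of_false h0 (by decide)
        · rw [hw1]; exact iff_of_true h1 (by decide)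
        · rw [hw2]; exact iff_of_false h2 (by decide)
        · rw [hw3]; exact iff_of_false h3 (by decide)
        · rw [hw4]; exact iff_of_false h4 (by decide)
      rw [hset, Set.ncard_coe_finset] at hcard
      exact absurd hcard (by decide)
    · -- FFTTT
      have hset : {i : ZMod 5 | G.Adj u (w i)} = (({2,3,4} : Finset (ZMod 5)) : Set (ZMod 5)) := by
        ext i
        simp only [Set.mem_setOf_eq]
        rcases zmod5_cases i with h|h|h|h|h <;> subst h
        · rw [hw0]; exact iff_of_false h0 (by decide)
        · rw [hw1]; exact iff_of_false h1 (by decide)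
        · rw [hw2]; exact iff_of_true h2 (by decide)
        · rw [hw3]; exact iff_of_true h3 (by decide)
        · rw [hw4]; exact iff_of_true h4 (by decide)
      rw [hset, Set.ncard_coe_finset] at hcard
      by_cases huv3 : G.Adj u (v 3)
      · refine ?_
        refine ⟨⟨hun, ?_⟩, (fun e => ha4 (e ▸ h4)), hub'⟩
        have hset2 : {i : ZMod 5 | G.Adj u (v i)} = (({2,3,4} : Finset (ZMod 5)) : Set (ZMod 5)) := by
          ext i
          simp only [Set.mem_setOf_eq]
          rcases zmod5_cases i with h|h|h|h|h <;> subst h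
          · exact iff_of_false h0 (by decide)
          · exact iff_of_false h1 (by decide)
          · exact iff_of_true h2 (by decide)
          · exact iff_of_true huv3 (by decide)
          · exact iff_of_true h4 (by decide)
        rw [hset2, Set.ncard_coe_finset]
        decide
      · exact (no_c4 hC4 h2 (hadj 2 3 (by decide)) (hadj 3 4 (by decide)) h4.symm huv3 (hnadj 2 4 (by decide)) (hun 3) (hvne 2 4 (by decide))).elim
    · -- FFTTF
      have hset : {i : ZMod 5 | G.Adj u (w i)} = (({2,3} : Finset (ZMod 5)) : Set (ZMod 5)) := by
        ext i
        simp only [Set.mem_setOf_eq]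
        rcases zmod5_cases i with h|h|h|h|h <;> subst h
        · rw [hw0]; exact iff_of_false h0 (by decide)
        · rw [hw1]; exact iff_of_false h1 (by decide)
        · rw [hw2]; exact iff_of_true h2 (by decide)
        · rw [hw3]; exact iff_of_true h3 (by decide)
        · rw [hw4]; exact iff_of_false h4 (by decide)
      rw [hset, Set.ncard_coe_finset] at hcard
      exact absurd hcard (by decide)
    · -- FFTFT
      have hset : {i : ZMod 5 | G.Adj u (w i)} = (({2,4} : Finset (ZMod 5)) : Set (ZMod 5)) := by
        ext i
        simp only [Set.mem_setOf_eq]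
        rcases zmod5_cases i with h|h|h|h|h <;> subst h
        · rw [hw0]; exact iff_of_false h0 (by decide)
        · rw [hw1]; exact iff_of_false h1 (by decide)
        · rw [hw2]; exact iff_of_true h2 (by decide)
        · rw [hw3]; exact iff_of_false h3 (by decide)
        · rw [hw4]; exact iff_of_true h4 (by decide)
      rw [hset, Set.ncard_coe_finset] at hcard
      exact absurd hcard (by decide)
    · -- FFTFF
      have hset : {i : ZMod 5 | G.Adj u (w i)} = (({2} : Finset (ZMod 5)) : Set (ZMod 5)) := by
        ext i
        simp only [Set.mem_setOf_eq]
        rcases zmod5_cases i with h|h|h|h|h <;> subst h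
        · rw [hw0]; exact iff_of_false h0 (by decide)
        · rw [hw1]; exact iff_of_false h1 (by decide)
        · rw [hw2]; exact iff_of_true h2 (by decide)
        · rw [hw3]; exact iff_of_false h3 (by decide)
        · rw [hw4]; exact iff_of_false h4 (by decide)
      rw [hset, Set.ncard_coe_finset] at hcard
      exact absurd hcard (by decide)
    · -- FFFTT
      have hset : {i : ZMod 5 | G.Adj u (w i)} = (({3,4} : Finset (ZMod 5)) : Set (ZMod 5)) := by
        ext i
        simp only [Set.mem_setOf_eq]
        rcases zmod5_cases i with h|h|h|h|h <;> subst h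
        · rw [hw0]; exact iff_of_false h0 (by decide)
        · rw [hw1]; exact iff_of_false h1 (by decide)
        · rw [hw2]; exact iff_of_false h2 (by decide)
        · rw [hw3]; exact iff_of_true h3 (by decide)
        · rw [hw4]; exact iff_of_true h4 (by decide)
      rw [hset, Set.ncard_coe_finset] at hcard
      exact absurd hcard (by decide)
    · -- FFFTF
      have hset : {i : ZMod 5 | G.Adj u (w i)} = (({3} : Finset (ZMod 5)) : Set (ZMod 5)) := by
        ext i
        simp only [Set.mem_setOf_eq]
        rcases zmod5_cases i with h|h|h|h|h <;> subst h
        · rw [hw0]; exact iff_of_false h0 (by decide)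
        · rw [hw1]; exact iff_of_false h1 (by decide)
        · rw [hw2]; exact iff_of_false h2 (by decide)
        · rw [hw3]; exact iff_of_true h3 (by decide)
        · rw [hw4]; exact iff_of_false h4 (by decide)
      rw [hset, Set.ncard_coe_finset] at hcard
      exact absurd hcard (by decide)
    · -- FFFFT
      have hset : {i : ZMod 5 | G.Adj u (w i)} = (({4} : Finset (ZMod 5)) : Set (ZMod 5)) := by
        ext i
        simp only [Set.mem_setOf_eq]
        rcases zmod5_cases i with h|h|h|h|h <;> subst h
        · rw [hw0]; exact iff_of_false h0 (by decide)
        · rw [hw1]; exact iff_of_false h1 (by decide)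
        · rw [hw2]; exact iff_of_false h2 (by decide)
        · rw [hw3]; exact iff_of_false h3 (by decide)
        · rw [hw4]; exact iff_of_true h4 (by decide)
      rw [hset, Set.ncard_coe_finset] at hcard
      exact absurd hcard (by decide)
    · -- FFFFF
      have hset : {i : ZMod 5 | G.Adj u (w i)} = (({} : Finset (ZMod 5)) : Set (ZMod 5)) := by
        ext i
        simp only [Set.mem_setOf_eq]
        rcases zmod5_cases i with h|h|h|h|h <;> subst h
        · rw [hw0]; exact iff_of_false h0 (by decide)
        · rw [hw1]; exact iff_of_false h1 (by decide)
        · rw [hw2]; exact iff_of_false h2 (by decide)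
        · rw [hw3]; exact iff_of_false h3 (by decide)
        · rw [hw4]; exact iff_of_false h4 (by decide)
      rw [hset, Set.ncard_coe_finset] at hcard
      exact absurd hcard (by decide)
  have hsub : cycSdeg G w 3 ⊆ insert (v 3) (cycSdeg G v 3 \ {a, b}) := by
    intro u hu
    by_cases h : u = v 3
    · exact Set.mem_insert_iff.mpr (Or.inl h)
    · obtain ⟨hm, hna, hnb'⟩ := hclaim u hu h
      exact Set.mem_insert_iff.mpr (Or.inr ⟨hm, by simp [hna, hnb']⟩)
  have hc1 : (cycSdeg G w 3).ncard ≤ (cycSdeg G v 3 \ {a, b}).ncard + 1 :=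
    le_trans (Set.ncard_le_ncard hsub (Set.toFinite _)) (Set.ncard_insert_le _ _)
  have habsub : ({a, b} : Set V) ⊆ cycSdeg G v 3 := by
    rintro x (rfl | rfl)
    · exact haS3
    · exact hbS3
  have hcard2 : ({a, b} : Set V).ncard = 2 := Set.ncard_pair hane
  have hd : (cycSdeg G v 3 \ {a, b}).ncard = (cycSdeg G v 3).ncard - 2 := by
    rw [Set.ncard_diff habsub, hcard2]
  have h2le : 2 ≤ (cycSdeg G v 3).ncard := by
    rw [← hcard2]; exact Set.ncard_le_ncard habsub (Set.toFinite _)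
  omega

lemma ncard_equiv {α β : Type*} (e : α ≃ β) (P : β → Prop) :
    {i | P (e i)}.ncard = {j | P j}.ncard := by
  rw [← Set.ncard_image_of_injective _ e.injective]
  congr 1
  ext j
  simp only [Set.mem_image, Set.mem_setOf_eq]
  exact ⟨fun ⟨x, hx, hxj⟩ => hxj ▸ hx, fun h => ⟨e.symm j, by simpa using h, e.apply_symm_apply j⟩⟩

def shiftEquiv (k : ZMod 5) : ZMod 5 ≃ ZMod 5 :=
  ⟨fun j => j + k, fun j => j - k, fun x => by ring, fun x => by ring⟩

def negshiftEquiv (k : ZMod 5) : ZMod 5 ≃ ZMod 5 :=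
  ⟨fun j => -j + k, fun j => k - j, fun x => by ring, fun x => by ring⟩

lemma cycSdeg_comp {V : Type*} (G : SimpleGraph V) (v : ZMod 5 → V)
    (e : ZMod 5 ≃ ZMod 5) (n : ℕ) :
    cycSdeg G (fun j => v (e j)) n = cycSdeg G v n := by
  ext u
  simp only [cycSdeg, Set.mem_setOf_eq]
  constructor
  · rintro ⟨h1, h2⟩
    refine ⟨fun i => by simpa using h1 (e.symm i), ?_⟩
    rw [← h2]
    exact (ncard_equiv e (fun j => G.Adj u (v j))).symm
  · rintro ⟨h1, h2⟩
    exact ⟨fun i => h1 (e i), by rw [ncard_equiv e (fun j => G.Adj u (v j))]; exact h2⟩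

lemma cycSdeg_shift {V : Type*} (G : SimpleGraph V) (v : ZMod 5 → V) (k : ZMod 5) (n : ℕ) :
    cycSdeg G (fun j => v (j + k)) n = cycSdeg G v n :=
  cycSdeg_comp G v (shiftEquiv k) n

lemma cycSdeg_negshift {V : Type*} (G : SimpleGraph V) (v : ZMod 5 → V) (k : ZMod 5) (n : ℕ) :
    cycSdeg G (fun j => v (-j + k)) n = cycSdeg G v n :=
  cycSdeg_comp G v (negshiftEquiv k) n

lemma isInducedC5_shift {V : Type*} {G : SimpleGraph V} {v : ZMod 5 → V}
    (hv : IsInducedC5 G v) (k : ZMod 5) : IsInducedC5 G (fun j => v (j + k)) := by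
  refine ⟨fun x y e => ?_, fun i j => ?_⟩
  · have := hv.1 e
    exact add_right_cancel this
  · rw [hv.2 (i + k) (j + k)]
    exact (by decide : ∀ i j k : ZMod 5,
      ((j + k = i + k + 1 ∨ i + k = j + k + 1) ↔ (j = i + 1 ∨ i = j + 1))) i j k

lemma isInducedC5_negshift {V : Type*} {G : SimpleGraph V} {v : ZMod 5 → V}
    (hv : IsInducedC5 G v) (k : ZMod 5) : IsInducedC5 G (fun j => v (-j + k)) := by
  refine ⟨fun x y e => ?_, fun i j => ?_⟩
  · have h := hv.1 e
    have : -x = -y := add_right_cancel h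
    simpa using congrArg Neg.neg this
  · rw [hv.2 (-i + k) (-j + k)]
    exact (by decide : ∀ i j k : ZMod 5,
      ((-j + k = -i + k + 1 ∨ -i + k = -j + k + 1) ↔ (j = i + 1 ∨ i = j + 1))) i j k


end Aux

theorem stmt_7 {V : Type*} [Fintype V] (G : SimpleGraph V)
    (hC4 : _root_.Free G (cycleGraph 4)) (hC6 : _root_.Free G (cycleGraph 6))
    (hF1 : _root_.Free G F1) (hF2 : _root_.Free G F2) (hP6 : _root_.Free G (pathGraph 6))
    (hsa : IsStrongAtom G)
    (v : ZMod 5 → V) (hv : IsInducedC5 G v)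
    (hmax5 : ∀ w : ZMod 5 → V, IsInducedC5 G w →
      (cycSdeg G w 5).ncard ≤ (cycSdeg G v 5).ncard)
    (hmin3 : ∀ w : ZMod 5 → V, IsInducedC5 G w →
      (cycSdeg G w 5).ncard = (cycSdeg G v 5).ncard →
      (cycSdeg G v 3).ncard ≤ (cycSdeg G w 3).ncard)
    (i : ZMod 5) :
    CompleteTo G (cycS G v {i - 1, i, i + 1}) (cycS G v {i, i + 1, i + 2}) := by
  intro a ha b hb
  by_contra hab
  have hadj : ∀ x y : ZMod 5, (y = x + 1 ∨ x = y + 1) → G.Adj (v x) (v y) :=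
    fun x y h => (hv.2 x y).mpr h
  have hnadj : ∀ x y : ZMod 5, ¬(y = x + 1 ∨ x = y + 1) → ¬G.Adj (v x) (v y) :=
    fun x y h h' => h ((hv.2 x y).mp h')
  have hA : ∀ c : ZMod 5, G.Adj a (v (i + c)) ↔ (c = 4 ∨ c = 0 ∨ c = 1) := by
    intro c
    rw [ha.2 (i + c)]
    simp only [Set.mem_insert_iff, Set.mem_singleton_iff]
    exact (by decide : ∀ z c : ZMod 5,
      ((z + c = z - 1 ∨ z + c = z ∨ z + c = z + 1) ↔ (c = 4 ∨ c = 0 ∨ c = 1))) i c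
  have hB : ∀ c : ZMod 5, G.Adj b (v (i + c)) ↔ (c = 0 ∨ c = 1 ∨ c = 2) := by
    intro c
    rw [hb.2 (i + c)]
    simp only [Set.mem_insert_iff, Set.mem_singleton_iff]
    exact (by decide : ∀ z c : ZMod 5,
      ((z + c = z ∨ z + c = z + 1 ∨ z + c = z + 2) ↔ (c = 0 ∨ c = 1 ∨ c = 2))) i c
  by_cases hbad : ∃ u : V, G.Adj u (v (i + 4)) ∧ G.Adj u (v (i + 0)) ∧ G.Adj u b ∧
      ¬G.Adj u (v (i + 1)) ∧ ¬G.Adj u (v (i + 2)) ∧ ¬G.Adj u (v (i + 3)) ∧ ¬G.Adj u a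
  · -- the "bad" case: use the reversed cycle with roles of a, b swapped
    obtain ⟨u₀, hu1, hu2, hu3, hu4, hu5, hu6, hu7⟩ := hbad
    refine core hC4 hC6 (fun j => v (-j + (i + 3))) (isInducedC5_negshift hv _)
      (fun w hw => by rw [cycSdeg_negshift]; exact hmax5 w hw)
      (fun w hw h5 => by rw [cycSdeg_negshift] at h5 ⊢; exact hmin3 w hw h5)
      (a := b) (b := a) ?_ ?_ ?_ ?_ ?_ ?_ ?_ ?_ ?_ ?_ (fun h => hab h.symm) ?_
    · show G.Adj b (v (-1 + (i + 3)))
      rw [(by decide : ∀ z : ZMod 5, (-1 : ZMod 5) + (z + 3) = z + 2) i]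
      exact (hB 2).mpr (by decide)
    · show G.Adj b (v (-2 + (i + 3)))
      rw [(by decide : ∀ z : ZMod 5, (-2 : ZMod 5) + (z + 3) = z + 1) i]
      exact (hB 1).mpr (by decide)
    · show G.Adj b (v (-3 + (i + 3)))
      rw [(by decide : ∀ z : ZMod 5, (-3 : ZMod 5) + (z + 3) = z + 0) i]
      exact (hB 0).mpr (by decide)
    · show ¬G.Adj b (v (-4 + (i + 3)))
      rw [(by decide : ∀ z : ZMod 5, (-4 : ZMod 5) + (z + 3) = z + 4) i]
      exact fun h => absurd ((hB 4).mp h) (by decide)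
    · show ¬G.Adj b (v (-0 + (i + 3)))
      rw [(by decide : ∀ z : ZMod 5, (-0 : ZMod 5) + (z + 3) = z + 3) i]
      exact fun h => absurd ((hB 3).mp h) (by decide)
    · show G.Adj a (v (-2 + (i + 3)))
      rw [(by decide : ∀ z : ZMod 5, (-2 : ZMod 5) + (z + 3) = z + 1) i]
      exact (hA 1).mpr (by decide)
    · show G.Adj a (v (-3 + (i + 3)))
      rw [(by decide : ∀ z : ZMod 5, (-3 : ZMod 5) + (z + 3) = z + 0) i]
      exact (hA 0).mpr (by decide)
    · show G.Adj a (v (-4 + (i + 3)))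
      rw [(by decide : ∀ z : ZMod 5, (-4 : ZMod 5) + (z + 3) = z + 4) i]
      exact (hA 4).mpr (by decide)
    · show ¬G.Adj a (v (-0 + (i + 3)))
      rw [(by decide : ∀ z : ZMod 5, (-0 : ZMod 5) + (z + 3) = z + 3) i]
      exact fun h => absurd ((hA 3).mp h) (by decide)
    · show ¬G.Adj a (v (-1 + (i + 3)))
      rw [(by decide : ∀ z : ZMod 5, (-1 : ZMod 5) + (z + 3) = z + 2) i]
      exact fun h => absurd ((hA 2).mp h) (by decide)
    · -- the "no bad vertex" condition for the reversed configuration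
      intro u k1 k2 k3 k4 k5 k6
      replace k1 : G.Adj u (v (i + 2)) := by
        simpa only [(by decide : ∀ z : ZMod 5, (-1 : ZMod 5) + (z + 3) = z + 2) i] using k1
      replace k2 : G.Adj u (v (i + 1)) := by
        simpa only [(by decide : ∀ z : ZMod 5, (-2 : ZMod 5) + (z + 3) = z + 1) i] using k2
      replace k4 : ¬G.Adj u (v (i + 0)) := by
        simpa only [(by decide : ∀ z : ZMod 5, (-3 : ZMod 5) + (z + 3) = z + 0) i] using k4
      replace k5 : ¬G.Adj u (v (i + 4)) := by
        simpa only [(by decide : ∀ z : ZMod 5, (-4 : ZMod 5) + (z + 3) = z + 4) i] using k5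
      replace k6 : ¬G.Adj u (v (i + 3)) := by
        simpa only [(by decide : ∀ z : ZMod 5, (-0 : ZMod 5) + (z + 3) = z + 3) i] using k6
      by_contra hub
      by_cases huu : G.Adj u u₀
      · -- C4 : v(i+4), a, u, u₀
        exact no_c4 hC4 ((hA 4).mpr (by decide)).symm k3.symm huu hu1
          (fun h => k5 h.symm) (fun h => hu7 h.symm)
          (fun e => hnadj (i + 4) (i + 1)
            ((by decide : ∀ z : ZMod 5, ¬(z + 1 = z + 4 + 1 ∨ z + 4 = z + 1 + 1)) i)
            (by rw [e]; exact k2))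
          (fun e => hu4 (e ▸ (hA 1).mpr (by decide)))
      · -- C6 : v(i+4), a, u, v(i+2), b, u₀
        exact no_c6 hC6 ((hA 4).mpr (by decide)).symm k3.symm k1 ((hB 2).mpr (by decide)).symm
          hu3.symm hu1
          (fun h => k5 h.symm)
          (hnadj (i + 4) (i + 2)
            ((by decide : ∀ z : ZMod 5, ¬(z + 2 = z + 4 + 1 ∨ z + 4 = z + 2 + 1)) i))
          (fun h => absurd ((hB 4).mp h.symm) (by decide))
          (fun h => absurd ((hA 2).mp h) (by decide))
          hab (fun h => hu7 h.symm) hub huu (fun h => hu5 h.symm)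
          (fun e => hnadj (i + 4) (i + 1)
            ((by decide : ∀ z : ZMod 5, ¬(z + 1 = z + 4 + 1 ∨ z + 4 = z + 1 + 1)) i)
            (by rw [e]; exact k2))
          (fun e => ((by decide : ∀ z : ZMod 5, ¬(z + 4 = z + 2)) i) (hv.1 e))
          (fun e => hnadj (i + 4) (i + 1)
            ((by decide : ∀ z : ZMod 5, ¬(z + 1 = z + 4 + 1 ∨ z + 4 = z + 1 + 1)) i)
            (by rw [e]; exact (hB 1).mpr (by decide)))
          (fun e => hnadj (i + 2) (i + 0)
            ((by decide : ∀ z : ZMod 5, ¬(z + 0 = z + 2 + 1 ∨ z + 2 = z + 0 + 1)) i)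
            (by rw [← e]; exact (hA 0).mpr (by decide)))
          (fun e => absurd ((hB 4).mp (by rw [← e]; exact (hA 4).mpr (by decide))) (by decide))
          (fun e => hu4 (by rw [← e]; exact (hA 1).mpr (by decide)))
          (fun e => hab ((e ▸ k3).symm))
          (fun e => hu4 (e ▸ k2))
          (fun e => hnadj (i + 2) (i + 0)
            ((by decide : ∀ z : ZMod 5, ¬(z + 0 = z + 2 + 1 ∨ z + 2 = z + 0 + 1)) i)
            (by rw [e]; exact hu2))
  · -- no bad vertex: use the shifted cycle directly
    refine core hC4 hC6 (fun j => v (j + (i + 3))) (isInducedC5_shift hv _)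
      (fun w hw => by rw [cycSdeg_shift]; exact hmax5 w hw)
      (fun w hw h5 => by rw [cycSdeg_shift] at h5 ⊢; exact hmin3 w hw h5)
      (a := a) (b := b) ?_ ?_ ?_ ?_ ?_ ?_ ?_ ?_ ?_ ?_ hab ?_
    · show G.Adj a (v (1 + (i + 3)))
      rw [(by decide : ∀ z : ZMod 5, (1 : ZMod 5) + (z + 3) = z + 4) i]
      exact (hA 4).mpr (by decide)
    · show G.Adj a (v (2 + (i + 3)))
      rw [(by decide : ∀ z : ZMod 5, (2 : ZMod 5) + (z + 3) = z + 0) i]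
      exact (hA 0).mpr (by decide)
    · show G.Adj a (v (3 + (i + 3)))
      rw [(by decide : ∀ z : ZMod 5, (3 : ZMod 5) + (z + 3) = z + 1) i]
      exact (hA 1).mpr (by decide)
    · show ¬G.Adj a (v (4 + (i + 3)))
      rw [(by decide : ∀ z : ZMod 5, (4 : ZMod 5) + (z + 3) = z + 2) i]
      exact fun h => absurd ((hA 2).mp h) (by decide)
    · show ¬G.Adj a (v (0 + (i + 3)))
      rw [(by decide : ∀ z : ZMod 5, (0 : ZMod 5) + (z + 3) = z + 3) i]
      exact fun h => absurd ((hA 3).mp h) (by decide)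
    · show G.Adj b (v (2 + (i + 3)))
      rw [(by decide : ∀ z : ZMod 5, (2 : ZMod 5) + (z + 3) = z + 0) i]
      exact (hB 0).mpr (by decide)
    · show G.Adj b (v (3 + (i + 3)))
      rw [(by decide : ∀ z : ZMod 5, (3 : ZMod 5) + (z + 3) = z + 1) i]
      exact (hB 1).mpr (by decide)
    · show G.Adj b (v (4 + (i + 3)))
      rw [(by decide : ∀ z : ZMod 5, (4 : ZMod 5) + (z + 3) = z + 2) i]
      exact (hB 2).mpr (by decide)
    · show ¬G.Adj b (v (0 + (i + 3)))
      rw [(by decide : ∀ z : ZMod 5, (0 : ZMod 5) + (z + 3) = z + 3) i]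
      exact fun h => absurd ((hB 3).mp h) (by decide)
    · show ¬G.Adj b (v (1 + (i + 3)))
      rw [(by decide : ∀ z : ZMod 5, (1 : ZMod 5) + (z + 3) = z + 4) i]
      exact fun h => absurd ((hB 4).mp h) (by decide)
    · intro u k1 k2 k3 k4 k5 k6
      by_contra hna
      apply hbad
      refine ⟨u, ?_, ?_, k3, ?_, ?_, ?_, hna⟩
      · simpa only [(by decide : ∀ z : ZMod 5, (1 : ZMod 5) + (z + 3) = z + 4) i] using k1
      · simpa only [(by decide : ∀ z : ZMod 5, (2 : ZMod 5) + (z + 3) = z + 0) i] using k2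
      · simpa only [(by decide : ∀ z : ZMod 5, (3 : ZMod 5) + (z + 3) = z + 1) i] using k4
      · simpa only [(by decide : ∀ z : ZMod 5, (4 : ZMod 5) + (z + 3) = z + 2) i] using k5
      · simpa only [(by decide : ∀ z : ZMod 5, (0 : ZMod 5) + (z + 3) = z + 3) i] using k6
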